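/- Every tree that is not a caterpillar contains a subtree isomorphic to the spider Y: a root with three children, each of which has exactly one child (i.e., the tree obtained by subdividing every edge of the star K_{1,3} once). -/

import Mathlib

open SimpleGraph

/-- Clockwise distance from position `x` to position `v` in the cyclic order `ZMod n`. -/
def relpos {n : ℕ} (x v : ZMod n) : ℕ := (v - x).val

/-- `(v, v+1)` is a candidate gap for the non-edge `{x,y}` (arc taken clockwise from
`x` to `y`): the consecutive vertices `v, v+1` are non-adjacent, `[v, v+1] ⊆ [x, y]`,
and no edge of `G` joins a vertex of `[x, v]` to a vertex of `[v+1, y]`. -/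
def CandidateGap {n : ℕ} (G : SimpleGraph (ZMod n)) (x y v : ZMod n) : Prop :=
  ¬ G.Adj v (v + 1) ∧
  relpos x v < relpos x (v + 1) ∧
  relpos x (v + 1) ≤ relpos x y ∧
  ∀ u w : ZMod n, relpos x u ≤ relpos x v → relpos (v + 1) w ≤ relpos (v + 1) y →
    ¬ G.Adj u w

/-- The gap condition: every non-edge has a candidate gap (on one of its two arcs). -/
def GapCondition {n : ℕ} (G : SimpleGraph (ZMod n)) : Prop :=
  ∀ x y : ZMod n, x ≠ y → ¬ G.Adj x y →
    ∃ v : ZMod n, CandidateGap G x y v ∨ CandidateGap G y x v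

/-- Vertex `v` has the consecutive-neighbors property: its neighbors occupy
circularly consecutive positions `a, a+1, …, a+k-1`. -/
def CNP {n : ℕ} (G : SimpleGraph (ZMod n)) (v : ZMod n) : Prop :=
  ∃ (a : ZMod n) (k : ℕ), ∀ w : ZMod n,
    G.Adj v w ↔ ∃ i : ℕ, i < k ∧ w = a + (i : ZMod n)

/-- A caterpillar: a tree in which every vertex is within distance 1 of a central path. -/
def IsCaterpillar {V : Type*} (G : SimpleGraph V) : Prop :=
  G.IsTree ∧ ∃ (a b : V) (p : G.Walk a b), p.IsPath ∧
    ∀ v : V, v ∈ p.support ∨ ∃ u ∈ p.support, G.Adj v u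

/-- The spider `Y`: center `0` adjacent to `1,2,3`, which have pendant children `4,5,6`. -/
def spiderY : SimpleGraph (Fin 7) :=
  SimpleGraph.fromEdgeSet {s(0,1), s(0,2), s(0,3), s(1,4), s(2,5), s(3,6)}

section Aux
open SimpleGraph Walk
variable {V : Type*} {G : SimpleGraph V}


lemma getVert_mem_support' {u v : V} (p : G.Walk u v) (n : ℕ) (hn : n ≤ p.length) :
    p.getVert n ∈ p.support :=
  Walk.mem_support_iff_exists_getVert.mpr ⟨n, rfl, hn⟩

lemma path_getVert_inj' {u v : V} {p : G.Walk u v} (hp : p.IsPath) :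
    ∀ i j, i ≤ p.length → j ≤ p.length → p.getVert i = p.getVert j → i = j := by
  induction p with
  | nil => intro i j hi hj _; simp at hi hj; omega
  | cons h q ih =>
    rw [Walk.cons_isPath_iff] at hp
    intro i j hi hj hij
    simp only [Walk.length_cons] at hi hj
    match i, j with
    | 0, 0 => rfl
    | 0, j+1 =>
      exfalso
      rw [Walk.getVert_zero, Walk.getVert_cons_succ] at hij
      exact hp.2 (hij ▸ getVert_mem_support' q j (by omega))
    | i+1, 0 =>
      exfalso
      rw [Walk.getVert_zero, Walk.getVert_cons_succ] at hij
      exact hp.2 (hij ▸ getVert_mem_support' q i (by omega))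
    | i+1, j+1 =>
      rw [Walk.getVert_cons_succ, Walk.getVert_cons_succ] at hij
      have := ih hp.1 i j (by omega) (by omega) hij
      omega

lemma append_isPath'' {u v w : V} {p : G.Walk u v} {q : G.Walk v w}
    (hp : p.IsPath) (hq : q.IsPath)
    (h : ∀ x, x ∈ p.support → x ∈ q.support → x = v) : (p.append q).IsPath := by
  rw [Walk.isPath_def, Walk.support_append]
  refine List.Nodup.append hp.support_nodup hq.support_nodup.tail ?_
  intro x hxp hxq
  have hx : x ∈ q.support := List.mem_of_mem_tail hxq
  have hxv := h x hxp hx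
  rw [hxv] at hxq
  have hcons : q.support = v :: q.support.tail := q.support_eq_cons
  have hnd := hq.support_nodup
  rw [hcons, List.nodup_cons] at hnd
  exact hnd.1 hxq

lemma exists_longest_path' (V : Type*) [Fintype V] (G : SimpleGraph V) (hG : G.Connected) :
    ∃ (a b : V) (p : G.Walk a b), p.IsPath ∧
      ∀ (c d : V) (q : G.Walk c d), q.IsPath → q.length ≤ p.length := by
  classical
  obtain ⟨x⟩ := hG.nonempty
  set P : ℕ → Prop := fun n => ∃ (a b : V) (p : G.Walk a b), p.IsPath ∧ p.length = n with hP
  have h0 : P 0 := ⟨x, x, Walk.nil, Walk.IsPath.nil, rfl⟩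
  have hbdd : ∀ n, P n → n ≤ Fintype.card V := by
    rintro n ⟨a, b, p, hp, rfl⟩; exact hp.length_lt.le
  have hN : P (Nat.findGreatest P (Fintype.card V)) :=
    Nat.findGreatest_spec (Nat.zero_le _) h0
  obtain ⟨a, b, p, hp, hlen⟩ := hN
  refine ⟨a, b, p, hp, ?_⟩
  intro c d q hq
  rw [hlen]
  exact Nat.le_findGreatest (hbdd _ ⟨c, d, q, hq, rfl⟩) ⟨c, d, q, hq, rfl⟩

lemma exists_meet' {v a : V} (q : G.Walk v a) (S : Set V) (ha : a ∈ S) :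
    ∃ (c : V) (r : G.Walk v c), c ∈ S ∧ (∀ w ∈ r.support, w ∈ S → w = c) ∧
      r.support.Sublist q.support := by
  classical
  induction q with
  | nil => exact ⟨_, Walk.nil, ha, by simp, List.Sublist.refl _⟩
  | @cons u x y h q ih =>
    by_cases hu : u ∈ S
    · refine ⟨u, Walk.nil, hu, by simp, ?_⟩
      simp only [Walk.support_nil, Walk.support_cons]
      exact (List.nil_sublist _).cons₂ u
    · obtain ⟨c, r, hc, hr, hsub⟩ := ih ha
      refine ⟨c, Walk.cons h r, hc, ?_, ?_⟩
      · intro w hw hwS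
        rw [Walk.support_cons, List.mem_cons] at hw
        rcases hw with rfl | hw
        · exact absurd hwS hu
        · exact hr w hw hwS
      · rw [Walk.support_cons, Walk.support_cons]
        exact hsub.cons₂ u


end Aux

/-- Every tree that is not a caterpillar contains a subtree isomorphic to the spider `Y`. -/
theorem stmt_0 {V : Type*} [Fintype V] (T : SimpleGraph V)
    (hT : T.IsTree) (hC : ¬ IsCaterpillar T) :
    ∃ f : Fin 7 ↪ V, ∀ i j : Fin 7, spiderY.Adj i j → T.Adj (f i) (f j) := by
  classical
  obtain ⟨a, b, p, hp, hmax⟩ := exists_longest_path' V T hT.isConnected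
  have hnc : ¬ (∀ v : V, v ∈ p.support ∨ ∃ u ∈ p.support, T.Adj v u) := by
    intro h; exact hC ⟨hT, a, b, p, hp, h⟩
  push_neg at hnc
  obtain ⟨v, hv1, hv2⟩ := hnc
  obtain ⟨q0⟩ := hT.isConnected v a
  obtain ⟨c, r, hcS, hrS, hsub⟩ := exists_meet' (q0.toPath : T.Walk v a)
    {w | w ∈ p.support} p.start_mem_support
  have hcp : c ∈ p.support := hcS
  have hr : r.IsPath := by
    rw [Walk.isPath_def]
    exact hsub.nodup (q0.toPath.prop.support_nodup)
  -- r has length ≥ 2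
  have hm2 : 2 ≤ r.length := by
    by_contra hlt
    push_neg at hlt
    interval_cases hm : r.length
    · exact hv1 (Walk.eq_of_length_eq_zero hm ▸ hcp)
    · have hadj : T.Adj v c := by
        have := r.adj_getVert_succ (i := 0) (by omega)
        rwa [Walk.getVert_zero, show (0+1 : ℕ) = r.length from by omega,
          Walk.getVert_length] at this
      exact hv2 c hcp hadj
  set q1 := p.takeUntil c hcp with hq1def
  set q2 := p.dropUntil c hcp with hq2def
  have hspec : q1.append q2 = p := p.take_spec hcp
  have hq1 : q1.IsPath := hp.takeUntil hcp
  have hq2 : q2.IsPath := hp.dropUntil hcp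
  have hlen : q1.length + q2.length = p.length := by
    rw [← hspec, Walk.length_append]
  have hsupp : p.support = q1.support ++ q2.support.tail := by
    rw [← hspec, Walk.support_append]
  -- common vertices of r and p equal c
  have hrc : ∀ x, x ∈ r.support → x ∈ p.support → x = c := fun x hx hxp => hrS x hx hxp
  -- common vertices of q1 and q2 equal c
  have h12 : ∀ x, x ∈ q1.support → x ∈ q2.support → x = c := by
    intro x hx1 hx2
    by_contra hne
    have hnd := hp.support_nodup
    rw [hsupp, List.nodup_append] at hnd
    have hx2' : x ∈ q2.support.tail := by
      have := q2.support_eq_cons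
      rw [this, List.mem_cons] at hx2
      exact hx2.resolve_left hne
    exact hnd.2.2 x hx1 x hx2' rfl
  -- branch lengths ≥ 2 by maximality
  have hl1 : 2 ≤ q1.length := by
    have hP1 : (r.append q2).IsPath := by
      refine append_isPath'' hr hq2 ?_
      intro x hx hx2
      exact hrc x hx (p.support_dropUntil_subset hcp hx2)
    have := hmax _ _ _ hP1
    rw [Walk.length_append] at this
    omega
  have hl2 : 2 ≤ q2.length := by
    have hP2 : (r.append q1.reverse).IsPath := by
      refine append_isPath'' hr hq1.reverse ?_
      intro x hx hx2
      rw [Walk.support_reverse, List.mem_reverse] at hx2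
      exact hrc x hx (p.support_takeUntil_subset hcp hx2)
    have := hmax _ _ _ hP2
    rw [Walk.length_append, Walk.length_reverse] at this
    omega
  -- the seven vertices
  set y1 := q1.getVert (q1.length - 1) with hy1
  set y2 := q1.getVert (q1.length - 2) with hy2
  set z1 := q2.getVert 1 with hz1
  set z2 := q2.getVert 2 with hz2
  set w1 := r.getVert (r.length - 1) with hw1
  set w2 := r.getVert (r.length - 2) with hw2
  -- adjacencies
  have hacz1 : T.Adj c z1 := by
    have := q2.adj_getVert_succ (i := 0) (by omega)
    rwa [Walk.getVert_zero] at this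
  have haz12 : T.Adj z1 z2 := q2.adj_getVert_succ (i := 1) (by omega)
  have hacy1 : T.Adj c y1 := by
    have := q1.adj_getVert_succ (i := q1.length - 1) (by omega)
    rw [show q1.length - 1 + 1 = q1.length from by omega, Walk.getVert_length] at this
    exact this.symm
  have hay12 : T.Adj y1 y2 := by
    have := q1.adj_getVert_succ (i := q1.length - 2) (by omega)
    rw [show q1.length - 2 + 1 = q1.length - 1 from by omega] at this
    exact this.symm
  have hacw1 : T.Adj c w1 := by
    have := r.adj_getVert_succ (i := r.length - 1) (by omega)
    rw [show r.length - 1 + 1 = r.length from by omega, Walk.getVert_length] at this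
    exact this.symm
  have haw12 : T.Adj w1 w2 := by
    have := r.adj_getVert_succ (i := r.length - 2) (by omega)
    rw [show r.length - 2 + 1 = r.length - 1 from by omega] at this
    exact this.symm
  -- memberships
  have hy1m : y1 ∈ q1.support := getVert_mem_support' _ _ (by omega)
  have hy2m : y2 ∈ q1.support := getVert_mem_support' _ _ (by omega)
  have hz1m : z1 ∈ q2.support := getVert_mem_support' _ _ (by omega)
  have hz2m : z2 ∈ q2.support := getVert_mem_support' _ _ (by omega)
  have hw1m : w1 ∈ r.support := getVert_mem_support' _ _ (by omega)
  have hw2m : w2 ∈ r.support := getVert_mem_support' _ _ (by omega)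
  have hy1p : y1 ∈ p.support := p.support_takeUntil_subset hcp hy1m
  have hy2p : y2 ∈ p.support := p.support_takeUntil_subset hcp hy2m
  have hz1p : z1 ∈ p.support := p.support_dropUntil_subset hcp hz1m
  have hz2p : z2 ∈ p.support := p.support_dropUntil_subset hcp hz2m
  -- injectivity facts
  have inj1 := path_getVert_inj' hq1
  have inj2 := path_getVert_inj' hq2
  have injr := path_getVert_inj' hr
  have hcq1 : c = q1.getVert q1.length := (Walk.getVert_length q1).symm
  have hcq2 : c = q2.getVert 0 := (Walk.getVert_zero q2).symm
  have hcr : c = r.getVert r.length := (Walk.getVert_length r).symm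
  have hcy1 : c ≠ y1 := fun h => by
    have := inj1 q1.length (q1.length - 1) le_rfl (by omega) (hcq1 ▸ h); omega
  have hcy2 : c ≠ y2 := fun h => by
    have := inj1 q1.length (q1.length - 2) le_rfl (by omega) (hcq1 ▸ h); omega
  have hy12 : y1 ≠ y2 := fun h => by
    have := inj1 (q1.length - 1) (q1.length - 2) (by omega) (by omega) h; omega
  have hcz1 : c ≠ z1 := fun h => by
    have := inj2 0 1 (by omega) (by omega) (hcq2 ▸ h); omega
  have hcz2 : c ≠ z2 := fun h => by
    have := inj2 0 2 (by omega) (by omega) (hcq2 ▸ h); omega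
  have hz12 : z1 ≠ z2 := fun h => by
    have := inj2 1 2 (by omega) (by omega) h; omega
  have hcw1 : c ≠ w1 := fun h => by
    have := injr r.length (r.length - 1) le_rfl (by omega) (hcr ▸ h); omega
  have hcw2 : c ≠ w2 := fun h => by
    have := injr r.length (r.length - 2) le_rfl (by omega) (hcr ▸ h); omega
  have hw12 : w1 ≠ w2 := fun h => by
    have := injr (r.length - 1) (r.length - 2) (by omega) (by omega) h; omega
  -- y's vs z's
  have hyz : ∀ x x', x ∈ q1.support → x ≠ c → x' ∈ q2.support → x' ≠ c → x ≠ x' := by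
    intro x x' hx hxc hx' _ h
    exact hxc (h12 x hx (h ▸ hx'))
  have hy1z1 : y1 ≠ z1 := hyz _ _ hy1m (Ne.symm hcy1) hz1m (Ne.symm hcz1)
  have hy1z2 : y1 ≠ z2 := hyz _ _ hy1m (Ne.symm hcy1) hz2m (Ne.symm hcz2)
  have hy2z1 : y2 ≠ z1 := hyz _ _ hy2m (Ne.symm hcy2) hz1m (Ne.symm hcz1)
  have hy2z2 : y2 ≠ z2 := hyz _ _ hy2m (Ne.symm hcy2) hz2m (Ne.symm hcz2)
  -- w's not on p
  have hw1p : w1 ∉ p.support := fun h => (Ne.symm hcw1) (hrc w1 hw1m h)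
  have hw2p : w2 ∉ p.support := fun h => (Ne.symm hcw2) (hrc w2 hw2m h)
  have hw1y1 : w1 ≠ y1 := fun h => hw1p (h ▸ hy1p)
  have hw1y2 : w1 ≠ y2 := fun h => hw1p (h ▸ hy2p)
  have hw1z1 : w1 ≠ z1 := fun h => hw1p (h ▸ hz1p)
  have hw1z2 : w1 ≠ z2 := fun h => hw1p (h ▸ hz2p)
  have hw2y1 : w2 ≠ y1 := fun h => hw2p (h ▸ hy1p)
  have hw2y2 : w2 ≠ y2 := fun h => hw2p (h ▸ hy2p)
  have hw2z1 : w2 ≠ z1 := fun h => hw2p (h ▸ hz1p)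
  have hw2z2 : w2 ≠ z2 := fun h => hw2p (h ▸ hz2p)
  -- the embedding
  set g : Fin 7 → V := ![c, y1, z1, w1, y2, z2, w2] with hg
  have hginj : Function.Injective g := by
    intro i j hij
    rw [hg] at hij
    fin_cases i <;> fin_cases j <;> simp only [Matrix.cons_val_zero, Matrix.cons_val_one,
      Matrix.head_cons, Matrix.cons_val_two, Matrix.tail_cons, Matrix.cons_val_three,
      Matrix.cons_val_four, Matrix.cons_val_succ, Matrix.cons_val_fin_one] at hij <;>
      first
        | rfl
        | exact absurd hij (by assumption)
        | exact absurd hij.symm (by assumption)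
  refine ⟨⟨g, hginj⟩, ?_⟩
  intro i j hadj
  have hmem : s(i, j) ∈ ({s((0:Fin 7),(1:Fin 7)), s(0,2), s(0,3), s(1,4), s(2,5), s(3,6)} : Set (Sym2 (Fin 7))) ∧ i ≠ j := by
    rwa [spiderY, SimpleGraph.fromEdgeSet_adj] at hadj
  simp only [Set.mem_insert_iff, Set.mem_singleton_iff, Sym2.eq, Sym2.rel_iff',
    Prod.mk.injEq, Prod.swap_prod_mk] at hmem
  obtain ⟨h6, -⟩ := hmem
  rcases h6 with (⟨rfl, rfl⟩|⟨rfl, rfl⟩)|(⟨rfl, rfl⟩|⟨rfl, rfl⟩)|(⟨rfl, rfl⟩|⟨rfl, rfl⟩)|(⟨rfl, rfl⟩|⟨rfl, rfl⟩)|(⟨rfl, rfl⟩|⟨rfl, rfl⟩)|(⟨rfl, rfl⟩|⟨rfl, rfl⟩) <;>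
    simp only [Function.Embedding.coeFn_mk, hg, Matrix.cons_val_zero, Matrix.cons_val_one,
      Matrix.head_cons, Matrix.cons_val_two, Matrix.tail_cons, Matrix.cons_val_three,
      Matrix.cons_val_four, Matrix.cons_val_succ, Matrix.cons_val_fin_one] <;>
    first
      | exact hacy1 | exact hacy1.symm | exact hacz1 | exact hacz1.symm
      | exact hacw1 | exact hacw1.symm | exact hay12 | exact hay12.symm
      | exact haz12 | exact haz12.symm | exact haw12 | exact haw12.symm
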